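/- Let n = 3. There is a constant C, independent of t and W, such that for every t ∈ ℝ with |t| ≥ 1 and every Schwartz function W on ℝ³: ‖W‖_{L^{3/2}(ℝ³)} ≤ C |t|^{2/3} ‖W‖_{W¹_{M_{t,0}}}. -/

import Mathlib

open MeasureTheory Complex Filter

noncomputable section

abbrev Eucl (n : ℕ) := EuclideanSpace ℝ (Fin n)

/-- Partial derivative in the `j`-th coordinate direction. -/
def pd {n : ℕ} (j : Fin n) (u : Eucl n → ℂ) : Eucl n → ℂ :=
  fun z => fderiv ℝ u z (EuclideanSpace.single j 1)

/-- `D_{z_j} = -i ∂_{z_j}`. -/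
def Dop {n : ℕ} (j : Fin n) (u : Eucl n → ℂ) : Eucl n → ℂ :=
  fun z => -Complex.I * pd j u z

/-- Index type for the modules `M_t`, `M_{t,0}`, `𝒩`. -/
abbrev MIdx (n : ℕ) := Unit ⊕ (Fin n × Fin n) ⊕ Fin n ⊕ Fin n

/-- Generators of the module `M_t` (for `|t| ≥ 1/2`): identity,
rotations `z_j D_{z_i} - z_i D_{z_j}`, `2t D_{z_j} - z_j`, and `D_{z_j}`. -/
def Mgen {n : ℕ} (t : ℝ) : MIdx n → (Eucl n → ℂ) → (Eucl n → ℂ)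
  | Sum.inl _ => id
  | Sum.inr (Sum.inl (i, j)) => fun u z => (z j : ℂ) * Dop i u z - (z i : ℂ) * Dop j u z
  | Sum.inr (Sum.inr (Sum.inl j)) => fun u z => 2 * (t : ℂ) * Dop j u z - (z j : ℂ) * u z
  | Sum.inr (Sum.inr (Sum.inr j)) => fun u => Dop j u

/-- Generators of the module `M_{t,0}` (for `|t| ≥ 1/2`): identity,
rotations `z_j D_{z_i} - z_i D_{z_j}`, `2t D_{z_j}`, and `D_{z_j} + z_j/(2t)`. -/
def M0gen {n : ℕ} (t : ℝ) : MIdx n → (Eucl n → ℂ) → (Eucl n → ℂ)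
  | Sum.inl _ => id
  | Sum.inr (Sum.inl (i, j)) => fun u z => (z j : ℂ) * Dop i u z - (z i : ℂ) * Dop j u z
  | Sum.inr (Sum.inr (Sum.inl j)) => fun u z => 2 * (t : ℂ) * Dop j u z
  | Sum.inr (Sum.inr (Sum.inr j)) => fun u z => Dop j u z + ((z j : ℂ) / (2 * (t : ℂ))) * u z

/-- For `|t| < 1/2` the modules are defined with `t` replaced by `t+1`. -/
def tEff (t : ℝ) : ℝ := if 1/2 ≤ |t| then t else t + 1

/-- Apply an ordered tuple of generators `A₁ ⋯ A_k` to `u`. -/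
def applyTuple {X ι : Type*} (gen : ι → (X → ℂ) → (X → ℂ)) {k : ℕ}
    (A : Fin k → ι) (u : X → ℂ) : X → ℂ :=
  (List.ofFn fun i => gen (A i)).foldr (fun f v => f v) u

/-- The module regularity norm `‖u‖_{W^k}` with respect to a generating family `gen`:
square root of the sum of `‖A₁⋯A_k u‖²_{L²}` over all ordered `k`-tuples. -/
def Wnorm {n : ℕ} {ι : Type*} [Fintype ι] (gen : ι → (Eucl n → ℂ) → (Eucl n → ℂ))
    (k : ℕ) (u : Eucl n → ℂ) : ℝ :=
  Real.sqrt (∑ A : Fin k → ι, ((eLpNorm (applyTuple gen A u) 2 volume).toReal) ^ 2)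

/-! ### Auxiliary lemmas -/

open scoped ENNReal NNReal

lemma memLp_japanese {r q : ℝ} (hq : 0 < q) (h : 3 < r * q) :
    MemLp (fun x : Eucl 3 => (1 + ‖x‖) ^ (-r)) (ENNReal.ofReal q) volume := by
  have hr : 0 < r := by nlinarith
  have hmeas : Continuous (fun x : Eucl 3 => (1 + ‖x‖) ^ (-r)) := by
    apply Continuous.rpow_const (by continuity)
    intro x; left; positivity
  refine ⟨hmeas.aestronglyMeasurable, ?_⟩
  have hp0 : ENNReal.ofReal q ≠ 0 := by simp [ENNReal.ofReal_eq_zero, not_le.mpr hq]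
  have hpt : ENNReal.ofReal q ≠ ∞ := ENNReal.ofReal_ne_top
  rw [eLpNorm_eq_lintegral_rpow_enorm_toReal hp0 hpt]
  have htoReal : (ENNReal.ofReal q).toReal = q := ENNReal.toReal_ofReal hq.le
  rw [htoReal]
  have key : ∀ x : Eucl 3, ‖(1 + ‖x‖) ^ (-r)‖ₑ ^ q
      = ENNReal.ofReal ((1 + ‖x‖) ^ (-(r * q))) := by
    intro x
    have h0 : (0:ℝ) ≤ 1 + ‖x‖ := by positivity
    have h1 : (0:ℝ) ≤ (1 + ‖x‖) ^ (-r) := Real.rpow_nonneg h0 _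
    rw [Real.enorm_eq_ofReal h1, ENNReal.ofReal_rpow_of_nonneg h1 hq.le,
      ← Real.rpow_mul h0, neg_mul]
  simp_rw [key]
  have hfin := finite_integral_one_add_norm (E := Eucl 3) (μ := volume)
    (r := r * q) (by rw [finrank_euclideanSpace_fin]; exact_mod_cast h)
  exact ENNReal.rpow_lt_top_of_nonneg (by positivity) hfin.ne

lemma schwartz_memLp (f : SchwartzMap (Eucl 3) ℂ) {q : ℝ} (hq : 1 ≤ q) :
    MemLp (⇑f) (ENNReal.ofReal q) volume := by
  have hq0 : 0 < q := by linarith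
  obtain ⟨Cb, hCb⟩ : ∃ C : ℝ, ∀ x : Eucl 3, ‖f x‖ ≤ C * (1 + ‖x‖) ^ (-(4:ℝ)) := by
    refine ⟨2 ^ 4 * (Finset.Iic ((4:ℕ),(0:ℕ))).sup
      (fun m => SchwartzMap.seminorm ℝ m.1 m.2) f, fun x => ?_⟩
    have := SchwartzMap.one_add_le_sup_seminorm_apply (𝕜 := ℝ) (m := ((4:ℕ),(0:ℕ)))
      (k := 4) (n := 0) le_rfl le_rfl f x
    rw [norm_iteratedFDeriv_zero] at this
    have h0 : (0:ℝ) < 1 + ‖x‖ := by positivity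
    have h4 : (1 + ‖x‖) ^ (-(4:ℝ)) = ((1 + ‖x‖) ^ (4:ℕ))⁻¹ := by
      rw [Real.rpow_neg h0.le, ← Real.rpow_natCast]; norm_num
    rw [h4, ← div_eq_mul_inv, le_div_iff₀ (by positivity), mul_comm ‖f x‖]
    exact this
  exact (((memLp_japanese hq0 (by linarith)).const_mul Cb).of_le
    f.continuous.aestronglyMeasurable
    (Filter.Eventually.of_forall fun x => (hCb x).trans (le_abs_self _)))

lemma schwartz_memLp2 (f : SchwartzMap (Eucl 3) ℂ) : MemLp (⇑f) 2 volume := by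
  have := schwartz_memLp f (q := 2) one_le_two
  rwa [ENNReal.ofReal_ofNat] at this

/-- multiplication by a coordinate, as a Schwartz map -/
def coordMul (j : Fin 3) (f : SchwartzMap (Eucl 3) ℂ) : SchwartzMap (Eucl 3) ℂ :=
  SchwartzMap.bilinLeftCLM ((ContinuousLinearMap.lsmul ℝ ℝ : ℝ →L[ℝ] ℂ →L[ℝ] ℂ).flip)
    ((EuclideanSpace.proj j : Eucl 3 →L[ℝ] ℝ).hasTemperateGrowth) f

lemma coordMul_apply (j : Fin 3) (f : SchwartzMap (Eucl 3) ℂ) (z : Eucl 3) :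
    coordMul j f z = (z j : ℂ) * f z := by
  have : coordMul j f z = (z j) • f z := rfl
  rw [this, Complex.real_smul]

def K0 : ℝ≥0∞ := ∫⁻ y : Eucl 3, ENNReal.ofReal ((1 + ‖y‖ ^ 2) ^ (-(3:ℝ))) ∂volume

lemma K0_lt_top : K0 < ∞ := by
  have hint := integrable_rpow_neg_one_add_norm_sq (E := Eucl 3) (μ := volume) (r := 6)
    (by rw [finrank_euclideanSpace_fin]; norm_num)
  have h2 := hint.2
  rw [HasFiniteIntegral] at h2
  have heq : ∀ y : Eucl 3, ‖((1:ℝ) + ‖y‖ ^ 2) ^ (-(6:ℝ) / 2)‖ₑ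
      = ENNReal.ofReal ((1 + ‖y‖ ^ 2) ^ (-(3:ℝ))) := by
    intro y
    have h0 : (0:ℝ) ≤ (1 + ‖y‖ ^ 2) ^ (-(6:ℝ)/2) := Real.rpow_nonneg (by positivity) _
    rw [Real.enorm_eq_ofReal h0]
    norm_num
  unfold K0
  simp_rw [heq] at h2
  exact h2

lemma contF : Continuous (fun y : Eucl 3 => (1 + ‖y‖ ^ 2) ^ (-(3:ℝ))) := by
  apply Continuous.rpow_const (by continuity)
  intro x; left; positivity

lemma phi_eLpNorm {t : ℝ} (ht : t ≠ 0) :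
    eLpNorm (fun z : Eucl 3 => (Real.sqrt (1 + ‖t⁻¹ • z‖ ^ 2))⁻¹) 6 volume
      = ENNReal.ofReal (|t| ^ ((1:ℝ)/2)) * K0 ^ ((1:ℝ)/6) := by
  rw [eLpNorm_eq_lintegral_rpow_enorm_toReal (by norm_num) (by norm_num)]
  have h6 : (6 : ℝ≥0∞).toReal = (6:ℝ) := by norm_num
  rw [h6]
  have key : ∀ z : Eucl 3, ‖(Real.sqrt (1 + ‖t⁻¹ • z‖ ^ 2))⁻¹‖ₑ ^ (6:ℝ)
      = ENNReal.ofReal ((1 + ‖t⁻¹ • z‖ ^ 2) ^ (-(3:ℝ))) := by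
    intro z
    set a : ℝ := 1 + ‖t⁻¹ • z‖ ^ 2 with ha
    have ha0 : (0:ℝ) < a := by positivity
    have hs0 : (0:ℝ) ≤ (Real.sqrt a)⁻¹ := by positivity
    rw [Real.enorm_eq_ofReal hs0, ENNReal.ofReal_rpow_of_nonneg hs0 (by norm_num)]
    congr 1
    rw [show ((6:ℝ)) = ((6:ℕ):ℝ) by norm_num, Real.rpow_natCast, inv_pow,
      Real.rpow_neg ha0.le, show ((3:ℝ)) = ((3:ℕ):ℝ) by norm_num, Real.rpow_natCast,
      show (6:ℕ)=2*3 by norm_num, pow_mul, Real.sq_sqrt ha0.le]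
  simp_rw [key]
  have hF : Measurable (fun y : Eucl 3 => ENNReal.ofReal ((1 + ‖y‖ ^ 2) ^ (-(3:ℝ)))) :=
    ENNReal.measurable_ofReal.comp contF.measurable
  have hcov : (∫⁻ z : Eucl 3, ENNReal.ofReal ((1 + ‖t⁻¹ • z‖ ^ 2) ^ (-(3:ℝ))) ∂volume)
      = ENNReal.ofReal (|t| ^ (3:ℕ)) * K0 := by
    have h1 : (∫⁻ z : Eucl 3, ENNReal.ofReal ((1 + ‖t⁻¹ • z‖ ^ 2) ^ (-(3:ℝ))) ∂volume)
        = ∫⁻ y, ENNReal.ofReal ((1 + ‖y‖ ^ 2) ^ (-(3:ℝ)))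
            ∂(Measure.map (fun z : Eucl 3 => t⁻¹ • z) volume) := by
      rw [lintegral_map hF (measurable_const_smul t⁻¹)]
    rw [h1]
    have h2 : Measure.map (fun z : Eucl 3 => t⁻¹ • z) volume
        = ENNReal.ofReal |((t⁻¹) ^ (Module.finrank ℝ (Eucl 3)))⁻¹| • volume :=
      MeasureTheory.Measure.map_addHaar_smul volume (inv_ne_zero ht)
    rw [h2, lintegral_smul_measure]
    congr 1
    rw [finrank_euclideanSpace_fin]
    congr 1
    rw [inv_pow, inv_inv, _root_.abs_pow]
  rw [hcov, ENNReal.mul_rpow_of_nonneg _ _ (by norm_num),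
    ENNReal.ofReal_rpow_of_nonneg (by positivity) (by norm_num)]
  congr 2
  rw [← Real.rpow_natCast |t| 3, ← Real.rpow_mul (abs_nonneg t)]
  norm_num

lemma applyTuple_one {X ι : Type*} (gen : ι → (X → ℂ) → (X → ℂ))
    (A : Fin 1 → ι) (u : X → ℂ) : applyTuple gen A u = gen (A 0) u := by
  simp [applyTuple, List.ofFn_succ]

lemma le_Wnorm_one {n : ℕ} {ι : Type*} [Fintype ι] (gen : ι → (Eucl n → ℂ) → (Eucl n → ℂ))
    (u : Eucl n → ℂ) (idx : ι) :
    (eLpNorm (gen idx u) 2 volume).toReal ≤ Wnorm gen 1 u := by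
  rw [Wnorm, ← Real.sqrt_sq (ENNReal.toReal_nonneg (a := eLpNorm (gen idx u) 2 volume))]
  apply Real.sqrt_le_sqrt
  have : (eLpNorm (gen idx u) 2 volume).toReal ^ 2
      = (eLpNorm (applyTuple gen (fun _ : Fin 1 => idx) u) 2 volume).toReal ^ 2 := by
    rw [applyTuple_one]
  rw [this]
  exact Finset.single_le_sum
    (f := fun A : Fin 1 → ι => (eLpNorm (applyTuple gen A u) 2 volume).toReal ^ 2)
    (fun A _ => sq_nonneg _) (Finset.mem_univ _)

lemma sqrt_bound (c : ℝ) (z : Eucl 3) :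
    Real.sqrt (1 + ‖c • z‖^2) ≤ 1 + (|c * z 0| + |c * z 1| + |c * z 2|) := by
  have hn : ‖c • z‖ ^ 2 = (c * z 0)^2 + (c * z 1)^2 + (c * z 2)^2 := by
    rw [EuclideanSpace.norm_eq, Real.sq_sqrt (by positivity)]
    simp [Fin.sum_univ_three, PiLp.smul_apply, smul_eq_mul, Real.norm_eq_abs, abs_mul]
    simp [mul_pow, sq_abs]
  rw [hn]
  have h1 : 1 + ((c * z 0)^2 + (c * z 1)^2 + (c * z 2)^2)
      ≤ (1 + (|c * z 0| + |c * z 1| + |c * z 2|))^2 := by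
    have := abs_nonneg (c * z 0); have := abs_nonneg (c * z 1); have := abs_nonneg (c * z 2)
    nlinarith [_root_.sq_abs (c * z 0), _root_.sq_abs (c * z 1), _root_.sq_abs (c * z 2)]
  calc Real.sqrt (1 + ((c * z 0)^2 + (c * z 1)^2 + (c * z 2)^2))
      ≤ Real.sqrt ((1 + (|c * z 0| + |c * z 1| + |c * z 2|))^2) := Real.sqrt_le_sqrt h1
    _ = 1 + (|c * z 0| + |c * z 1| + |c * z 2|) := Real.sqrt_sq (by positivity)

/-- in dimension 3 there is `C`, independent of `t` and `W`, such that
for `|t| ≥ 1`, `‖W‖_{L^{3/2}(ℝ³)} ≤ C |t|^{2/3} ‖W‖_{W¹_{M_{t,0}}}`. -/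
theorem stmt9 :
    ∃ C > 0, ∀ t : ℝ, 1 ≤ |t| → ∀ W : SchwartzMap (Eucl 3) ℂ,
      (eLpNorm (⇑W) (ENNReal.ofReal (3 / 2)) volume).toReal ≤
        C * |t| ^ ((2 : ℝ) / 3) * Wnorm (M0gen t) 1 ⇑W := by
  classical
  set K6 : ℝ := (K0 ^ ((1:ℝ)/6)).toReal with hK6
  have hK6nn : 0 ≤ K6 := ENNReal.toReal_nonneg
  refine ⟨10 * K6 + 1, by positivity, ?_⟩
  intro t ht W
  have ht0 : t ≠ 0 := by
    intro h; rw [h, abs_zero] at ht; linarith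
  have htc : (t : ℂ) ≠ 0 := by exact_mod_cast ht0
  set N := Wnorm (M0gen t) 1 ⇑W with hN
  have hN0 : 0 ≤ N := Real.sqrt_nonneg _
  -- Schwartz building blocks
  set P : Fin 3 → SchwartzMap (Eucl 3) ℂ :=
    fun j => LineDeriv.lineDerivOpCLM ℝ (SchwartzMap (Eucl 3) ℂ) (EuclideanSpace.single j (1:ℝ) : Eucl 3) W with hP
  have hDop : ∀ j z, Dop j (⇑W) z = -Complex.I * (P j) z := by
    intro j z
    simp [Dop, pd, hP, LineDeriv.lineDerivOpCLM_apply, SchwartzMap.lineDerivOp_apply_eq_fderiv]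
  -- generator functions and their representations
  have hg1 : ∀ j : Fin 3, M0gen t (Sum.inr (Sum.inr (Sum.inl j))) ⇑W
      = fun z => (2 * (t:ℂ) * (-Complex.I)) * (P j) z := by
    intro j; funext z
    show 2 * (t : ℂ) * Dop j (⇑W) z = _
    rw [hDop]; ring
  have hg2 : ∀ j : Fin 3, M0gen t (Sum.inr (Sum.inr (Sum.inr j))) ⇑W
      = fun z => (-Complex.I) * (P j) z + (2 * (t:ℂ))⁻¹ * (coordMul j W) z := by
    intro j; funext z
    show Dop j (⇑W) z + ((z j : ℂ) / (2 * (t:ℂ))) * W z = _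
    rw [hDop, coordMul_apply]
    field_simp
  have hmem1 : ∀ j : Fin 3, MemLp (M0gen t (Sum.inr (Sum.inr (Sum.inl j))) ⇑W) 2 volume := by
    intro j; rw [hg1 j]
    exact (schwartz_memLp2 (P j)).const_mul _
  have hmem2 : ∀ j : Fin 3, MemLp (M0gen t (Sum.inr (Sum.inr (Sum.inr j))) ⇑W) 2 volume := by
    intro j; rw [hg2 j]
    exact ((schwartz_memLp2 (P j)).const_mul _).add
      ((schwartz_memLp2 (coordMul j W)).const_mul _)
  -- abbreviations for the eLpNorms
  set A : Fin 3 → ℝ≥0∞ :=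
    fun j => eLpNorm (M0gen t (Sum.inr (Sum.inr (Sum.inl j))) ⇑W) 2 volume with hA
  set B : Fin 3 → ℝ≥0∞ :=
    fun j => eLpNorm (M0gen t (Sum.inr (Sum.inr (Sum.inr j))) ⇑W) 2 volume with hB
  set E0 : ℝ≥0∞ := eLpNorm (⇑W) 2 volume with hE0
  have hAfin : ∀ j, A j ≠ ∞ := fun j => (hmem1 j).2.ne
  have hBfin : ∀ j, B j ≠ ∞ := fun j => (hmem2 j).2.ne
  have hEfin : E0 ≠ ∞ := (schwartz_memLp2 W).2.ne
  -- the functions h_j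
  set h : Fin 3 → (Eucl 3 → ℂ) := fun j z => ((t⁻¹ * z j : ℝ) : ℂ) * W z with hh
  have hhcont : ∀ j, Continuous (h j) := by
    intro j
    exact (Complex.continuous_ofReal.comp
      (continuous_const.mul ((EuclideanSpace.proj j : Eucl 3 →L[ℝ] ℝ).continuous))).mul
      W.continuous
  -- h j bounded by generators
  have hhle : ∀ j, eLpNorm (h j) 2 volume ≤ 2 * B j + A j := by
    intro j
    have hid : h j = ((2:ℂ) • M0gen t (Sum.inr (Sum.inr (Sum.inr j))) ⇑W)
        - (((t:ℂ)⁻¹) • M0gen t (Sum.inr (Sum.inr (Sum.inl j))) ⇑W) := by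
      funext z
      show ((t⁻¹ * z j : ℝ) : ℂ) * W z
          = (2:ℂ) * (Dop j (⇑W) z + ((z j : ℂ) / (2 * (t:ℂ))) * W z)
            - (t:ℂ)⁻¹ * (2 * (t:ℂ) * Dop j (⇑W) z)
      push_cast
      field_simp
      ring
    rw [hid]
    have hs1 : AEStronglyMeasurable
        ((2:ℂ) • M0gen t (Sum.inr (Sum.inr (Sum.inr j))) ⇑W) volume :=
      ((hmem2 j).1.const_smul _)
    have hs2 : AEStronglyMeasurable
        (((t:ℂ)⁻¹) • M0gen t (Sum.inr (Sum.inr (Sum.inl j))) ⇑W) volume :=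
      ((hmem1 j).1.const_smul _)
    refine (eLpNorm_sub_le hs1 hs2 one_le_two).trans ?_
    rw [eLpNorm_const_smul, eLpNorm_const_smul]
    have c1 : (‖(2:ℂ)‖₊ : ℝ≥0∞) = 2 := by
      simp
    have c2 : (‖((t:ℂ))⁻¹‖₊ : ℝ≥0∞) ≤ 1 := by
      have h1 : (1:ℝ) ≤ ‖(t:ℂ)‖ := by
        rw [Complex.norm_real, Real.norm_eq_abs]; exact ht
      have h2 : ‖((t:ℂ))⁻¹‖ ≤ 1 := by
        rw [norm_inv]
        exact inv_le_one_of_one_le₀ h1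
      rw [← ENNReal.coe_one, ENNReal.coe_le_coe]
      exact_mod_cast h2
    simp only [enorm_eq_nnnorm]
    rw [c1]
    exact add_le_add le_rfl (le_trans (mul_le_mul_left c2 (A j)) (by rw [one_mul]))
  -- the weight functions
  set ψ : Eucl 3 → ℝ := fun z => Real.sqrt (1 + ‖t⁻¹ • z‖ ^ 2) with hψ
  have hψpos : ∀ z, 0 < ψ z := fun z => Real.sqrt_pos.mpr (by positivity)
  have hψcont : Continuous ψ :=
    Real.continuous_sqrt.comp (continuous_const.add ((continuous_const_smul t⁻¹).norm.pow 2))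
  set φf : Eucl 3 → ℝ := fun z => (Real.sqrt (1 + ‖t⁻¹ • z‖ ^ 2))⁻¹ with hφf
  have hφcont : Continuous φf := by
    apply Continuous.inv₀ (by exact hψcont)
    intro z; exact (hψpos z).ne'
  set f : Eucl 3 → ℂ := fun z => ψ z • W z with hf
  have hfcont : Continuous f := hψcont.smul W.continuous
  have hWeq : ⇑W = φf • f := by
    funext z
    show W z = φf z • (ψ z • W z)
    rw [smul_smul]
    have : φf z * ψ z = 1 := inv_mul_cancel₀ (hψpos z).ne'
    rw [this, one_smul]
  have hexp : (1:ℝ≥0∞) / ENNReal.ofReal (3/2) = 1/6 + 1/2 := by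
    rw [ENNReal.ofReal_div_of_pos (by norm_num)]
    norm_num
    rw [ENNReal.inv_div (by norm_num) (by norm_num),
      ← ENNReal.toReal_eq_toReal_iff' (by simp [ENNReal.div_eq_top])
        (ENNReal.add_ne_top.mpr ⟨by norm_num, by norm_num⟩),
      ENNReal.toReal_add (by norm_num) (by norm_num), ENNReal.toReal_div]
    simp [ENNReal.toReal_inv]
    norm_num
  have hHolder : eLpNorm (⇑W) (ENNReal.ofReal (3/2)) volume
      ≤ eLpNorm φf 6 volume * eLpNorm f 2 volume := by
    rw [hWeq]
    haveI : ENNReal.HolderTriple 6 2 (ENNReal.ofReal (3/2)) := ⟨by simpa [one_div] using hexp.symm⟩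
    exact eLpNorm_smul_le_mul_eLpNorm hfcont.aestronglyMeasurable
      hφcont.aestronglyMeasurable
  -- pointwise bound of f by v
  set v : Eucl 3 → ℝ :=
    (fun z => ‖W z‖) + ((fun z => ‖h 0 z‖) + ((fun z => ‖h 1 z‖) + (fun z => ‖h 2 z‖))) with hv
  have hfv : eLpNorm f 2 volume ≤ eLpNorm v 2 volume := by
    apply eLpNorm_mono
    intro z
    have hb := sqrt_bound t⁻¹ z
    have hnf : ‖f z‖ = ψ z * ‖W z‖ := by
      show ‖ψ z • W z‖ = _
      rw [norm_smul, Real.norm_eq_abs, _root_.abs_of_nonneg (hψpos z).le]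
    have hhj : ∀ j : Fin 3, ‖h j z‖ = |t⁻¹ * z j| * ‖W z‖ := by
      intro j
      show ‖((t⁻¹ * z j : ℝ):ℂ) * W z‖ = _
      rw [norm_mul, Complex.norm_real, Real.norm_eq_abs]
    have hvz : v z = (1 + (|t⁻¹ * z 0| + |t⁻¹ * z 1| + |t⁻¹ * z 2|)) * ‖W z‖ := by
      show ‖W z‖ + (‖h 0 z‖ + (‖h 1 z‖ + ‖h 2 z‖)) = _
      rw [hhj 0, hhj 1, hhj 2]; ring
    have : ‖f z‖ ≤ v z := by
      rw [hnf, hvz]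
      exact mul_le_mul_of_nonneg_right hb (norm_nonneg _)
    exact this.trans (le_abs_self _)
  -- triangle inequality for v
  have m0 : AEStronglyMeasurable (fun z : Eucl 3 => ‖W z‖) volume :=
    W.continuous.norm.aestronglyMeasurable
  have mh : ∀ j, AEStronglyMeasurable (fun z : Eucl 3 => ‖h j z‖) volume :=
    fun j => (hhcont j).norm.aestronglyMeasurable
  have hvsplit : eLpNorm v 2 volume
      ≤ E0 + (eLpNorm (h 0) 2 volume + (eLpNorm (h 1) 2 volume + eLpNorm (h 2) 2 volume)) := by
    calc eLpNorm v 2 volume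
        ≤ eLpNorm (fun z : Eucl 3 => ‖W z‖) 2 volume
          + eLpNorm ((fun z : Eucl 3 => ‖h 0 z‖)
            + ((fun z : Eucl 3 => ‖h 1 z‖) + (fun z : Eucl 3 => ‖h 2 z‖))) 2 volume := by
          exact eLpNorm_add_le m0 ((mh 0).add ((mh 1).add (mh 2))) one_le_two
      _ ≤ eLpNorm (fun z : Eucl 3 => ‖W z‖) 2 volume
          + (eLpNorm (fun z : Eucl 3 => ‖h 0 z‖) 2 volume
            + eLpNorm ((fun z : Eucl 3 => ‖h 1 z‖) + (fun z : Eucl 3 => ‖h 2 z‖)) 2 volume) := by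
          gcongr
          exact eLpNorm_add_le (mh 0) ((mh 1).add (mh 2)) one_le_two
      _ ≤ eLpNorm (fun z : Eucl 3 => ‖W z‖) 2 volume
          + (eLpNorm (fun z : Eucl 3 => ‖h 0 z‖) 2 volume
            + (eLpNorm (fun z : Eucl 3 => ‖h 1 z‖) 2 volume
              + eLpNorm (fun z : Eucl 3 => ‖h 2 z‖) 2 volume)) := by
          gcongr
          exact eLpNorm_add_le (mh 1) (mh 2) one_le_two
      _ = E0 + (eLpNorm (h 0) 2 volume + (eLpNorm (h 1) 2 volume + eLpNorm (h 2) 2 volume)) := by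
          rw [eLpNorm_norm, eLpNorm_norm, eLpNorm_norm, eLpNorm_norm]
  -- bounds by N
  have hE0N : E0 ≤ ENNReal.ofReal N := by
    rw [ENNReal.le_ofReal_iff_toReal_le hEfin hN0]
    exact le_Wnorm_one (M0gen t) ⇑W (Sum.inl ())
  have hAN : ∀ j, A j ≤ ENNReal.ofReal N := by
    intro j
    rw [ENNReal.le_ofReal_iff_toReal_le (hAfin j) hN0]
    exact le_Wnorm_one (M0gen t) ⇑W (Sum.inr (Sum.inr (Sum.inl j)))
  have hBN : ∀ j, B j ≤ ENNReal.ofReal N := by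
    intro j
    rw [ENNReal.le_ofReal_iff_toReal_le (hBfin j) hN0]
    exact le_Wnorm_one (M0gen t) ⇑W (Sum.inr (Sum.inr (Sum.inr j)))
  have hsum : E0 + (eLpNorm (h 0) 2 volume + (eLpNorm (h 1) 2 volume + eLpNorm (h 2) 2 volume))
      ≤ ENNReal.ofReal (10 * N) := by
    have h10 : ENNReal.ofReal (10 * N)
        = ENNReal.ofReal N + (ENNReal.ofReal (3*N) + (ENNReal.ofReal (3*N) + ENNReal.ofReal (3*N))) := by
      rw [← ENNReal.ofReal_add (by linarith) (by linarith), ← ENNReal.ofReal_add (by linarith) (by linarith),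
        ← ENNReal.ofReal_add (by linarith) (by linarith)]
      ring_nf
    rw [h10]
    refine add_le_add hE0N (add_le_add ?_ (add_le_add ?_ ?_)) <;>
    · refine ((hhle _).trans ?_)
      have : ENNReal.ofReal (3*N) = 2 * ENNReal.ofReal N + ENNReal.ofReal N := by
        rw [show (2:ℝ≥0∞) = ENNReal.ofReal 2 by simp, ← ENNReal.ofReal_mul (by norm_num),
          ← ENNReal.ofReal_add (by linarith) hN0]
        congr 1
        ring
      rw [this]
      exact add_le_add (mul_le_mul_right (hBN _) _) (hAN _)
  -- assemble ENNReal bound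
  have henn : eLpNorm (⇑W) (ENNReal.ofReal (3/2)) volume
      ≤ (ENNReal.ofReal (|t| ^ ((1:ℝ)/2)) * K0 ^ ((1:ℝ)/6)) * ENNReal.ofReal (10 * N) := by
    refine hHolder.trans ?_
    have hφ6 : eLpNorm φf 6 volume = ENNReal.ofReal (|t| ^ ((1:ℝ)/2)) * K0 ^ ((1:ℝ)/6) :=
      phi_eLpNorm ht0
    rw [hφ6]
    exact mul_le_mul' le_rfl (hfv.trans (hvsplit.trans hsum))
  -- pass to reals
  have hK0fin : K0 ^ ((1:ℝ)/6) ≠ ∞ :=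
    (ENNReal.rpow_lt_top_of_nonneg (by norm_num) K0_lt_top.ne).ne
  have hRfin : (ENNReal.ofReal (|t| ^ ((1:ℝ)/2)) * K0 ^ ((1:ℝ)/6)) * ENNReal.ofReal (10 * N) ≠ ∞ :=
    ENNReal.mul_ne_top (ENNReal.mul_ne_top ENNReal.ofReal_ne_top hK0fin) ENNReal.ofReal_ne_top
  have hreal := ENNReal.toReal_mono hRfin henn
  rw [ENNReal.toReal_mul, ENNReal.toReal_mul, ENNReal.toReal_ofReal (by positivity),
    ENNReal.toReal_ofReal (by positivity)] at hreal
  refine hreal.trans ?_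
  have h23 : |t| ^ ((1:ℝ)/2) ≤ |t| ^ ((2:ℝ)/3) :=
    Real.rpow_le_rpow_of_exponent_le ht (by norm_num)
  have h23nn : (0:ℝ) ≤ |t| ^ ((2:ℝ)/3) := Real.rpow_nonneg (abs_nonneg t) _
  have h12nn : (0:ℝ) ≤ |t| ^ ((1:ℝ)/2) := Real.rpow_nonneg (abs_nonneg t) _
  nlinarith [mul_nonneg (mul_nonneg (sub_nonneg.mpr h23) hK6nn) hN0,
    mul_nonneg h23nn hN0, mul_nonneg hK6nn hN0]
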